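/- Let n ≥ p ≥ 1, α = √2/2, β = 1 − √2/2, and let X ∈ ℝ^{n×p} satisfy XᵀX = I_p. For 1 ≤ u ≤ n, 1 ≤ v ≤ p set W_{uv} = E_{uv} − α X E_{uv}ᵀ X − β X Xᵀ E_{uv}. Then the Stratonovich-to-Itô drift correction satisfies ∑_{u=1}^{n} ∑_{v=1}^{p} [ −α (W_{uv} E_{uv}ᵀ X + X E_{uv}ᵀ W_{uv}) − β (W_{uv} Xᵀ E_{uv} + X W_{uv}ᵀ E_{uv}) ] = −(n−1) X. -/

import Mathlib

open Matrix

section helpers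
variable {n p : ℕ}

private lemma sum_E_Et : ∑ u : Fin n, ∑ v : Fin p,
    single u v (1:ℝ) * (single u v (1:ℝ))ᵀ = (p : ℝ) • (1 : Matrix (Fin n) (Fin n) ℝ) := by
  ext i j
  simp [Matrix.sum_apply, Matrix.mul_apply, Matrix.single, Matrix.one_apply,
    Finset.sum_ite_eq, ite_and, eq_comm]

private lemma sum_Et_E : ∑ u : Fin n, ∑ v : Fin p,
    (single u v (1:ℝ))ᵀ * single u v (1:ℝ) = (n : ℝ) • (1 : Matrix (Fin p) (Fin p) ℝ) := by
  ext i j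
  simp [Matrix.sum_apply, Matrix.mul_apply, Matrix.single, Matrix.one_apply,
    Finset.sum_ite_eq, ite_and, eq_comm]

private lemma sum_Et_A_Et (A : Matrix (Fin n) (Fin p) ℝ) : ∑ u : Fin n, ∑ v : Fin p,
    (single u v (1:ℝ))ᵀ * A * (single u v (1:ℝ))ᵀ = Aᵀ := by
  ext i j
  simp [Matrix.sum_apply, Matrix.mul_apply, Matrix.single,
    Finset.sum_ite_eq, ite_and, Finset.mul_sum, Finset.sum_mul, mul_ite, ite_mul]

private lemma sum_E_A_E (A : Matrix (Fin p) (Fin n) ℝ) : ∑ u : Fin n, ∑ v : Fin p,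
    single u v (1:ℝ) * A * single u v (1:ℝ) = Aᵀ := by
  ext i j
  simp [Matrix.sum_apply, Matrix.mul_apply, Matrix.single,
    Finset.sum_ite_eq, ite_and, Finset.mul_sum, Finset.sum_mul, mul_ite, ite_mul]

private lemma sum_Et_B_E (B : Matrix (Fin n) (Fin n) ℝ) : ∑ u : Fin n, ∑ v : Fin p,
    (single u v (1:ℝ))ᵀ * B * single u v (1:ℝ) = (trace B) • (1 : Matrix (Fin p) (Fin p) ℝ) := by
  ext i j
  simp [Matrix.sum_apply, Matrix.mul_apply, Matrix.single, Matrix.one_apply, Matrix.trace,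
    Matrix.diag, Finset.sum_ite_eq, ite_and, eq_comm, Finset.mul_sum, Finset.sum_mul, mul_ite, ite_mul]

end helpers

/-- The projected field `P_{uv}(X) = E_{uv} - α X E_{uv}ᵀ X - β X Xᵀ E_{uv}` with
`α = √2/2`, `β = 1 - √2/2`. -/
noncomputable def projField {n p : ℕ} (X : Matrix (Fin n) (Fin p) ℝ)
    (u : Fin n) (v : Fin p) : Matrix (Fin n) (Fin p) ℝ :=
  Matrix.single u v (1 : ℝ)
    - (Real.sqrt 2 / 2) • (X * (Matrix.single u v (1 : ℝ))ᵀ * X)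
    - (1 - Real.sqrt 2 / 2) • (X * Xᵀ * Matrix.single u v (1 : ℝ))

/-- the Stratonovich-to-Itô drift correction equals `-(n-1) X`. -/
theorem ito_drift_correction (n p : ℕ) (hp : 1 ≤ p) (hpn : p ≤ n)
    (X : Matrix (Fin n) (Fin p) ℝ) (hX : Xᵀ * X = 1) :
    ∑ u : Fin n, ∑ v : Fin p,
      ((-(Real.sqrt 2 / 2)) • (projField X u v * (Matrix.single u v (1 : ℝ))ᵀ * X
          + X * (Matrix.single u v (1 : ℝ))ᵀ * projField X u v)
        + (-(1 - Real.sqrt 2 / 2)) • (projField X u v * Xᵀ * Matrix.single u v (1 : ℝ)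
          + X * (projField X u v)ᵀ * Matrix.single u v (1 : ℝ)))
      = (-((n : ℝ) - 1)) • X := by
  have hXXX : X * (Xᵀ * X) = X := by rw [hX, Matrix.mul_one]
  have htr : trace (X * Xᵀ) = (p : ℝ) := by
    rw [Matrix.trace_mul_comm, hX, Matrix.trace_one]; simp
  set a : ℝ := Real.sqrt 2 / 2 with ha
  have ha2 : a * a = 1 / 2 := by
    rw [ha, div_mul_div_comm, Real.mul_self_sqrt (by norm_num)]; norm_num
  have key : ∀ (u : Fin n) (v : Fin p),
      ((-a) • (projField X u v * (Matrix.single u v (1 : ℝ))ᵀ * X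
          + X * (Matrix.single u v (1 : ℝ))ᵀ * projField X u v)
        + (-(1 - a)) • (projField X u v * Xᵀ * Matrix.single u v (1 : ℝ)
          + X * (projField X u v)ᵀ * Matrix.single u v (1 : ℝ)))
      = (-a) • (single u v (1:ℝ) * ((single u v (1:ℝ))ᵀ * X))
      + (2 * a * a) • (X * ((single u v (1:ℝ))ᵀ * (X * ((single u v (1:ℝ))ᵀ * X))))
      + (a * (1 - a)) • (X * (Xᵀ * (single u v (1:ℝ) * ((single u v (1:ℝ))ᵀ * X))))
      + (-1 : ℝ) • (X * ((single u v (1:ℝ))ᵀ * single u v (1:ℝ)))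
      + (-(1 - a)) • (single u v (1:ℝ) * (Xᵀ * single u v (1:ℝ)))
      + (2 * a * (1 - a) + (1 - a) * (1 - a)) • (X * ((single u v (1:ℝ))ᵀ * (X * (Xᵀ * single u v (1:ℝ)))))
      + ((1 - a) * (1 - a) + a * (1 - a)) • (X * (Xᵀ * (single u v (1:ℝ) * (Xᵀ * single u v (1:ℝ))))) := by
    intro u v
    simp only [projField, ← ha, Matrix.sub_mul, Matrix.mul_sub, Matrix.smul_mul, Matrix.mul_smul,
      transpose_sub, transpose_smul, transpose_mul, transpose_transpose, Matrix.mul_assoc]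
    module
  calc
    ∑ u : Fin n, ∑ v : Fin p,
      ((-a) • (projField X u v * (Matrix.single u v (1 : ℝ))ᵀ * X
          + X * (Matrix.single u v (1 : ℝ))ᵀ * projField X u v)
        + (-(1 - a)) • (projField X u v * Xᵀ * Matrix.single u v (1 : ℝ)
          + X * (projField X u v)ᵀ * Matrix.single u v (1 : ℝ)))
      = ∑ u : Fin n, ∑ v : Fin p,
        ((-a) • (single u v (1:ℝ) * ((single u v (1:ℝ))ᵀ * X))
      + (2 * a * a) • (X * ((single u v (1:ℝ))ᵀ * (X * ((single u v (1:ℝ))ᵀ * X))))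
      + (a * (1 - a)) • (X * (Xᵀ * (single u v (1:ℝ) * ((single u v (1:ℝ))ᵀ * X))))
      + (-1 : ℝ) • (X * ((single u v (1:ℝ))ᵀ * single u v (1:ℝ)))
      + (-(1 - a)) • (single u v (1:ℝ) * (Xᵀ * single u v (1:ℝ)))
      + (2 * a * (1 - a) + (1 - a) * (1 - a)) • (X * ((single u v (1:ℝ))ᵀ * (X * (Xᵀ * single u v (1:ℝ)))))
      + ((1 - a) * (1 - a) + a * (1 - a)) • (X * (Xᵀ * (single u v (1:ℝ) * (Xᵀ * single u v (1:ℝ)))))) := by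
        exact Finset.sum_congr rfl fun u _ => Finset.sum_congr rfl fun v _ => key u v
    _ = (-a) • ((p:ℝ) • X) + (2 * a * a) • X + (a * (1 - a)) • ((p:ℝ) • X)
        + (-1 : ℝ) • ((n:ℝ) • X) + (-(1 - a)) • X
        + (2 * a * (1 - a) + (1 - a) * (1 - a)) • ((p:ℝ) • X)
        + ((1 - a) * (1 - a) + a * (1 - a)) • X := by
        have congr2 : ∀ (f g : Fin n → Fin p → Matrix (Fin n) (Fin p) ℝ),
            (∀ u v, f u v = g u v) → ∑ u, ∑ v, f u v = ∑ u, ∑ v, g u v := by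
          intro f g h
          exact Finset.sum_congr rfl fun u _ => Finset.sum_congr rfl fun v _ => h u v
        have hM1 : ∑ u : Fin n, ∑ v : Fin p,
            single u v (1:ℝ) * ((single u v (1:ℝ))ᵀ * X) = (p:ℝ) • X := by
          rw [congr2 _ (fun u v => single u v (1:ℝ) * (single u v (1:ℝ))ᵀ * X)
            (fun u v => (Matrix.mul_assoc _ _ _).symm)]
          simp only [← Matrix.sum_mul]
          rw [sum_E_Et, Matrix.smul_mul, Matrix.one_mul]
        have hM2 : ∑ u : Fin n, ∑ v : Fin p,
            X * ((single u v (1:ℝ))ᵀ * (X * ((single u v (1:ℝ))ᵀ * X))) = X := by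
          rw [congr2 _ (fun u v =>
              X * ((single u v (1:ℝ))ᵀ * X * (single u v (1:ℝ))ᵀ) * X)
            (fun u v => by simp only [Matrix.mul_assoc])]
          simp only [← Matrix.sum_mul, ← Matrix.mul_sum]
          rw [sum_Et_A_Et, Matrix.mul_assoc, hXXX]
        have hM3 : ∑ u : Fin n, ∑ v : Fin p,
            X * (Xᵀ * (single u v (1:ℝ) * ((single u v (1:ℝ))ᵀ * X))) = (p:ℝ) • X := by
          rw [congr2 _ (fun u v =>
              X * Xᵀ * (single u v (1:ℝ) * (single u v (1:ℝ))ᵀ) * X)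
            (fun u v => by simp only [Matrix.mul_assoc])]
          simp only [← Matrix.sum_mul, ← Matrix.mul_sum]
          rw [sum_E_Et, Matrix.mul_smul, Matrix.mul_one, Matrix.smul_mul, Matrix.mul_assoc, hXXX]
        have hM4 : ∑ u : Fin n, ∑ v : Fin p,
            X * ((single u v (1:ℝ))ᵀ * single u v (1:ℝ)) = (n:ℝ) • X := by
          simp only [← Matrix.mul_sum]
          rw [sum_Et_E, Matrix.mul_smul, Matrix.mul_one]
        have hM5 : ∑ u : Fin n, ∑ v : Fin p,
            X * ((single u v (1:ℝ))ᵀ * (X * (Xᵀ * single u v (1:ℝ)))) = (p:ℝ) • X := by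
          rw [congr2 _ (fun u v =>
              X * ((single u v (1:ℝ))ᵀ * (X * Xᵀ) * single u v (1:ℝ)))
            (fun u v => by simp only [Matrix.mul_assoc])]
          simp only [← Matrix.mul_sum]
          rw [sum_Et_B_E (X * Xᵀ), htr, Matrix.mul_smul, Matrix.mul_one]
        have hM6 : ∑ u : Fin n, ∑ v : Fin p,
            single u v (1:ℝ) * (Xᵀ * single u v (1:ℝ)) = X := by
          rw [congr2 _ (fun u v => single u v (1:ℝ) * Xᵀ * single u v (1:ℝ))
            (fun u v => (Matrix.mul_assoc _ _ _).symm)]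
          rw [sum_E_A_E Xᵀ, transpose_transpose]
        have hM7 : ∑ u : Fin n, ∑ v : Fin p,
            X * (Xᵀ * (single u v (1:ℝ) * (Xᵀ * single u v (1:ℝ)))) = X := by
          rw [congr2 _ (fun u v =>
              X * Xᵀ * (single u v (1:ℝ) * Xᵀ * single u v (1:ℝ)))
            (fun u v => by simp only [Matrix.mul_assoc])]
          simp only [← Matrix.mul_sum]
          rw [sum_E_A_E Xᵀ, transpose_transpose, Matrix.mul_assoc, hXXX]
        simp only [Finset.sum_add_distrib, ← Finset.smul_sum, hM1, hM2, hM3, hM4, hM5, hM6, hM7]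
    _ = (-((n : ℝ) - 1)) • X := by
        rw [smul_smul, smul_smul, smul_smul, smul_smul, ← add_smul, ← add_smul, ← add_smul,
          ← add_smul, ← add_smul, ← add_smul]
        congr 1
        nlinarith [ha2]
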